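/- Let a ≥ 1 be a natural number. Then ∑_{d ∣ 4a²} μ(d)·(log d)² equals: 2·(log 2)·(log p) if a = 2^i·p^j for some odd prime p and integers i ≥ 0, j ≥ 1; −(log 2)² if a = 2^i for some i ≥ 0; and 0 if a has at least two distinct odd prime divisors. -/

import Mathlib

open Finset

section Comb

variable {α : Type*} [DecidableEq α]

private lemma my_sum_powerset_insert {β : Type*} [AddCommMonoid β] {a : α} {s : Finset α}
    (ha : a ∉ s) (f : Finset α → β) :
    ∑ t ∈ (insert a s).powerset, f t =
      ∑ t ∈ s.powerset, f t + ∑ t ∈ s.powerset, f (insert a t) := by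
  rw [Finset.powerset_insert, Finset.sum_union, Finset.sum_image]
  · intro t ht u hu h
    have hat : a ∉ t := fun hm => ha (Finset.mem_powerset.mp ht hm)
    have hau : a ∉ u := fun hm => ha (Finset.mem_powerset.mp hu hm)
    have := congrArg (fun v : Finset α => v.erase a) h
    simpa [Finset.erase_insert hat, Finset.erase_insert hau] using this
  · rw [Finset.disjoint_left]
    intro t ht htim
    obtain ⟨u, _, rfl⟩ := Finset.mem_image.mp htim
    exact ha (Finset.mem_powerset.mp ht (Finset.mem_insert_self a u))

private lemma aux_h0 (s : Finset α) :
    ∑ t ∈ s.powerset, (-1 : ℝ) ^ t.card = if s = ∅ then 1 else 0 := by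
  have h := Finset.sum_powerset_neg_one_pow_card (x := s)
  have h2 : ((∑ t ∈ s.powerset, (-1 : ℤ) ^ t.card : ℤ) : ℝ)
      = ∑ t ∈ s.powerset, (-1 : ℝ) ^ t.card := by push_cast; rfl
  rw [← h2, h]
  split <;> norm_num

private lemma aux_h1 (f : α → ℝ) (a : α) (s : Finset α) (ha : a ∉ s) :
    ∑ t ∈ (insert a s).powerset, (-1 : ℝ) ^ t.card * (∑ x ∈ t, f x)
      = if s = ∅ then -f a else 0 := by
  rw [my_sum_powerset_insert ha]
  have step : ∀ t ∈ s.powerset, (-1 : ℝ) ^ (insert a t).card * (∑ x ∈ insert a t, f x)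
      = -((-1) ^ t.card * f a) - (-1) ^ t.card * (∑ x ∈ t, f x) := by
    intro t ht
    have hat : a ∉ t := fun h => ha (Finset.mem_powerset.mp ht h)
    rw [Finset.card_insert_of_notMem hat, Finset.sum_insert hat, pow_succ]; ring
  rw [Finset.sum_congr rfl step, Finset.sum_sub_distrib]
  have h3 : ∑ t ∈ s.powerset, -((-1 : ℝ) ^ t.card * f a)
      = -((∑ t ∈ s.powerset, (-1 : ℝ) ^ t.card) * f a) := by
    rw [Finset.sum_mul, ← Finset.sum_neg_distrib]
  rw [h3, aux_h0]
  split <;> ring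

private lemma aux_g (f : α → ℝ) (a : α) (s : Finset α) (ha : a ∉ s) :
    ∑ t ∈ (insert a s).powerset, (-1 : ℝ) ^ t.card * (∑ x ∈ t, f x) ^ 2
      = -(if s = ∅ then 1 else 0) * f a ^ 2
        - 2 * f a * ∑ t ∈ s.powerset, (-1 : ℝ) ^ t.card * (∑ x ∈ t, f x) := by
  rw [my_sum_powerset_insert ha]
  have step : ∀ t ∈ s.powerset, (-1 : ℝ) ^ (insert a t).card * (∑ x ∈ insert a t, f x) ^ 2
      = -((-1) ^ t.card * f a ^ 2) - 2 * f a * ((-1) ^ t.card * (∑ x ∈ t, f x))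
          - (-1) ^ t.card * (∑ x ∈ t, f x) ^ 2 := by
    intro t ht
    have hat : a ∉ t := fun h => ha (Finset.mem_powerset.mp ht h)
    rw [Finset.card_insert_of_notMem hat, Finset.sum_insert hat, pow_succ]; ring
  rw [Finset.sum_congr rfl step, Finset.sum_sub_distrib, Finset.sum_sub_distrib]
  have h1 : ∑ t ∈ s.powerset, -((-1 : ℝ) ^ t.card * f a ^ 2)
      = -((∑ t ∈ s.powerset, (-1 : ℝ) ^ t.card) * f a ^ 2) := by
    rw [Finset.sum_mul, ← Finset.sum_neg_distrib]
  have h2 : ∑ t ∈ s.powerset, 2 * f a * ((-1 : ℝ) ^ t.card * (∑ x ∈ t, f x))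
      = 2 * f a * ∑ t ∈ s.powerset, (-1 : ℝ) ^ t.card * (∑ x ∈ t, f x) := by
    rw [Finset.mul_sum]
  rw [h1, h2, aux_h0]
  split <;> ring

end Comb

private lemma moebius_prod_primes (t : Finset ℕ) (h : ∀ p ∈ t, p.Prime) :
    ArithmeticFunction.moebius (∏ p ∈ t, p) = (-1) ^ t.card := by
  induction t using Finset.induction_on with
  | empty => simp
  | @insert a s ha ih =>
    have hap : a.Prime := h a (Finset.mem_insert_self a s)
    have hcop : Nat.Coprime a (∏ p ∈ s, p) := by
      rw [Nat.Prime.coprime_iff_not_dvd hap]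
      intro hd
      obtain ⟨q, hq, hdq⟩ := hap.prime.exists_mem_finset_dvd hd
      have : a = q := ((Nat.prime_dvd_prime_iff_eq hap (h q (Finset.mem_insert_of_mem hq))).mp hdq)
      exact ha (this ▸ hq)
    rw [Finset.prod_insert ha,
      ArithmeticFunction.isMultiplicative_moebius.map_mul_of_coprime hcop,
      ArithmeticFunction.moebius_apply_prime hap,
      ih (fun p hp => h p (Finset.mem_insert_of_mem hp)),
      Finset.card_insert_of_notMem ha, pow_succ]
    ring

private lemma divsum_eq (n : ℕ) (hn : n ≠ 0) :
    ∑ d ∈ n.divisors, (ArithmeticFunction.moebius d : ℝ) * (Real.log d) ^ 2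
      = ∑ t ∈ n.primeFactors.powerset, (-1 : ℝ) ^ t.card * (∑ p ∈ t, Real.log p) ^ 2 := by
  rw [← Finset.sum_filter_of_ne (p := fun d => Squarefree d)
    (f := fun d => (ArithmeticFunction.moebius d : ℝ) * (Real.log d) ^ 2)
    (fun d _ hne => by
      by_contra hsq
      exact hne (by simp [ArithmeticFunction.moebius_eq_zero_of_not_squarefree hsq]))]
  rw [Nat.sum_divisors_filter_squarefree hn]
  have hfac : (UniqueFactorizationMonoid.normalizedFactors n).toFinset = n.primeFactors := by
    rw [Nat.factors_eq]
    exact Nat.toFinset_factors n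
  rw [hfac]
  refine Finset.sum_congr rfl fun t ht => ?_
  have hps : ∀ p ∈ t, p.Prime := fun p hp =>
    Nat.prime_of_mem_primeFactors (Finset.mem_powerset.mp ht hp)
  have hprod : (t.val.prod : ℕ) = ∏ p ∈ t, p := by
    rw [Finset.prod_eq_multiset_prod, Multiset.map_id']
  rw [hprod, moebius_prod_primes t hps]
  have hlog : Real.log (∏ p ∈ t, p : ℕ) = ∑ p ∈ t, Real.log p := by
    rw [Nat.cast_prod]
    exact Real.log_prod (fun p hp => by
      exact_mod_cast (hps p hp).pos.ne')
  rw [hlog]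
  push_cast
  ring

private lemma primeFactors_four_a_sq (a : ℕ) (ha : 1 ≤ a) :
    (4 * a ^ 2).primeFactors = insert 2 (a.primeFactors.erase 2) := by
  have ha0 : a ≠ 0 := by omega
  have h4 : (4 : ℕ) ≠ 0 := by norm_num
  have hsq : a ^ 2 ≠ 0 := pow_ne_zero 2 ha0
  rw [Nat.primeFactors_mul h4 hsq, Nat.primeFactors_pow a (by norm_num)]
  have h4p : (4 : ℕ).primeFactors = {2} := by
    rw [show (4 : ℕ) = 2 ^ 2 from rfl, Nat.primeFactors_pow 2 two_ne_zero,
      Nat.Prime.primeFactors Nat.prime_two]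
  rw [h4p]
  ext q
  simp only [Finset.mem_union, Finset.mem_singleton, Finset.mem_insert, Finset.mem_erase]
  constructor
  · rintro (rfl | hq)
    · exact Or.inl rfl
    · by_cases hq2 : q = 2
      · exact Or.inl hq2
      · exact Or.inr ⟨hq2, hq⟩
  · rintro (rfl | ⟨_, hq⟩)
    · exact Or.inl rfl
    · exact Or.inr hq

theorem mulog2_four_a_sq (a : ℕ) (ha : 1 ≤ a) :
    (∀ p i j : ℕ, p.Prime → p ≠ 2 → 1 ≤ j → a = 2 ^ i * p ^ j →
      ∑ d ∈ (4 * a ^ 2).divisors, (ArithmeticFunction.moebius d : ℝ) * (Real.log d) ^ 2 =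
        2 * Real.log 2 * Real.log p) ∧
    (∀ i : ℕ, a = 2 ^ i →
      ∑ d ∈ (4 * a ^ 2).divisors, (ArithmeticFunction.moebius d : ℝ) * (Real.log d) ^ 2 =
        -(Real.log 2) ^ 2) ∧
    (2 ≤ (a.primeFactors.erase 2).card →
      ∑ d ∈ (4 * a ^ 2).divisors, (ArithmeticFunction.moebius d : ℝ) * (Real.log d) ^ 2 = 0) := by
  have ha0 : a ≠ 0 := by omega
  have hn0 : 4 * a ^ 2 ≠ 0 := by positivity
  have hdiv := divsum_eq (4 * a ^ 2) hn0
  have hpf := primeFactors_four_a_sq a ha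
  set f : ℕ → ℝ := fun p => Real.log p with hf
  have h2ne : (2 : ℕ) ∉ a.primeFactors.erase 2 := Finset.notMem_erase 2 _
  refine ⟨?_, ?_, ?_⟩
  · intro p i j hp hp2 hj haeq
    have herase : a.primeFactors.erase 2 = {p} := by
      ext q
      simp only [Finset.mem_erase, Nat.mem_primeFactors, Finset.mem_singleton]
      constructor
      · rintro ⟨hq2, hqp, hqd, -⟩
        rw [haeq] at hqd
        have hcop : Nat.Coprime q (2 ^ i) :=
          Nat.Coprime.pow_right i ((Nat.coprime_primes hqp Nat.prime_two).mpr hq2)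
        have : q ∣ p ^ j := hcop.dvd_of_dvd_mul_left hqd
        exact ((Nat.prime_dvd_prime_iff_eq hqp hp).mp (hqp.dvd_of_dvd_pow this))
      · intro hq
        subst hq
        refine ⟨hp2, hp, ?_, ha0⟩
        rw [haeq]
        exact Dvd.dvd.mul_left (dvd_pow_self q (by omega)) _
    rw [hdiv, hpf, herase]
    have h2np : (2 : ℕ) ∉ ({p} : Finset ℕ) := by simp [Ne.symm hp2]
    have hH1 := aux_h1 f p ∅ (Finset.notMem_empty p)
    rw [if_pos rfl, show insert p (∅ : Finset ℕ) = {p} from rfl] at hH1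
    rw [aux_g f 2 {p} h2np, hH1, if_neg (Finset.singleton_ne_empty p)]
    have h2' : f 2 = Real.log 2 := by simp [hf]
    have hp' : f p = Real.log p := by simp [hf]
    rw [h2', hp']
    ring
  · intro i haeq
    have herase : a.primeFactors.erase 2 = ∅ := by
      ext q
      simp only [Finset.mem_erase, Nat.mem_primeFactors, Finset.notMem_empty, iff_false]
      rintro ⟨hq2, hqp, hqd, -⟩
      rw [haeq] at hqd
      exact hq2 ((Nat.prime_dvd_prime_iff_eq hqp Nat.prime_two).mp (hqp.dvd_of_dvd_pow hqd))
    rw [hdiv, hpf, herase]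
    rw [aux_g f 2 ∅ (Finset.notMem_empty 2)]
    have h2' : f 2 = Real.log 2 := by simp [hf]
    simp only [if_pos rfl, Finset.powerset_empty, Finset.sum_singleton, Finset.card_empty,
      Finset.sum_empty, pow_zero, mul_zero, h2', if_true]
    ring
  · intro hcard
    set s := a.primeFactors.erase 2 with hs
    obtain ⟨b, hb⟩ : ∃ b, b ∈ s := Finset.card_pos.mp (by omega) |>.exists_mem
    have hbs : s = insert b (s.erase b) := (Finset.insert_erase hb).symm
    have hbe : b ∉ s.erase b := Finset.notMem_erase b s
    have hne : s.erase b ≠ ∅ := by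
      intro h
      have := Finset.card_erase_of_mem hb
      rw [h] at this
      simp at this
      omega
    rw [hdiv, hpf, aux_g f 2 s h2ne, hbs, aux_h1 f b (s.erase b) hbe, if_neg hne]
    rw [if_neg (by rw [hbs]; exact Finset.insert_ne_empty b _)]
    ring
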